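/- arXiv:1809.04122 — 3 statements merged into one kernel-verified Lean document; each statement's English description precedes it below -/
import Mathlib

section
/- Let ν ≥ 3 be a square-free integer with ν ≡ 2 or 3 (mod 4), let P_n(t) = f^{∘n}(t) be the n-th iterate of f(t) = t² − ν in ℤ[t], and write P_m(t) = R_m(t)·t⁴ + D_m·t² + C_m (for m ≥ 1) with R_m ∈ ℤ[t], D_m the coefficient of t², and C_m = P_m(0). Let p be an odd prime not dividing ν which divides C_m for some m ≥ 1, and let n(p) be the least positive integer n such that p divides C_n. Then for every n ≥ 0, the polynomial P̄_n²·R̄_{n(p)}(P̄_n) + D̄_{n(p)} is separable in 𝔽_p[t]. -/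
open Polynomial

/-- Let `ν ≥ 3` be a square-free integer with `ν ≡ 2` or `3 (mod 4)`, `P n = f^{∘n}` the
`n`-th iterate of `f(t) = t² − ν`, and write `P m = R_m·t⁴ + D_m·t² + C_m` (for `m ≥ 1`),
where `D_m` is the coefficient of `t²` and `C_m = P m (0)`.  Let `p` be an odd prime not
dividing `ν`, dividing some `C m` with `m ≥ 1`, and let `n(p)` be the least positive index
`n` with `p ∣ C n`.  Then for every `n ≥ 0`, the polynomial
`P̄ₙ² · R̄_{n(p)}(P̄ₙ) + D̄_{n(p)}` has no repeated irreducible factor in `𝔽_p[t]`. -/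
theorem squarefree_cofactor
    (ν : ℕ) (hν3 : 3 ≤ ν) (hsf : Squarefree ν) (hmod : ν % 4 = 2 ∨ ν % 4 = 3)
    (P : ℕ → Polynomial ℤ)
    (hP0 : P 0 = Polynomial.X)
    (hPs : ∀ n, P (n + 1) = (P n) ^ 2 - Polynomial.C (ν : ℤ))
    (p : ℕ) [Fact p.Prime] (hp2 : p ≠ 2) (hpν : ¬ p ∣ ν)
    (np : ℕ) (hnp1 : 1 ≤ np)
    (hnpdvd : (p : ℤ) ∣ (P np).coeff 0)
    (hnpleast : ∀ k, 1 ≤ k → (p : ℤ) ∣ (P k).coeff 0 → np ≤ k)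
    (Rnp : Polynomial ℤ)
    (hRnp : P np = Rnp * Polynomial.X ^ 4 + Polynomial.C ((P np).coeff 2) * Polynomial.X ^ 2
      + Polynomial.C ((P np).coeff 0))
    (n : ℕ) :
    Squarefree (((P n).map (Int.castRingHom (ZMod p))) ^ 2 *
        (Rnp.map (Int.castRingHom (ZMod p))).comp ((P n).map (Int.castRingHom (ZMod p))) +
      Polynomial.C (((P np).coeff 2 : ℤ) : ZMod p)) := by
  have hpP : p.Prime := Fact.out
  have hpodd : ¬ (p : ℤ) ∣ 2 := by
    intro h
    have h2 : p ∣ 2 := by exact_mod_cast h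
    exact hp2 ((Nat.prime_dvd_prime_iff_eq hpP Nat.prime_two).mp h2)
  -- basic structure of the iterates
  have hcomp : ∀ a b, P (a + b) = (P b).comp (P a) := by
    intro a b
    induction b with
    | zero => simp [hP0]
    | succ b ih =>
        rw [show a + (b + 1) = (a + b) + 1 from rfl, hPs, ih, hPs, sub_comp, pow_comp, C_comp]
  have hmonic : ∀ m, (P m).Monic ∧ 1 ≤ (P m).natDegree := by
    intro m
    induction m with
    | zero => simp [hP0, monic_X]
    | succ m ih =>
        have h2 : P (m + 1) = (P m) ^ 2 + C (-(ν : ℤ)) := by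
          rw [hPs, C_neg, ← sub_eq_add_neg]
        have hdeg : (C (-(ν : ℤ))).degree < ((P m) ^ 2).degree := by
          refine lt_of_le_of_lt degree_C_le ?_
          rw [← natDegree_pos_iff_degree_pos, natDegree_pow]
          omega
        constructor
        · rw [h2]; exact (ih.1.pow 2).add_of_left hdeg
        · rw [h2, natDegree_add_eq_left_of_degree_lt hdeg, natDegree_pow]; omega
  have hderiv : ∀ m, derivative (P m) = C ((2 : ℤ) ^ m) * ∏ k ∈ Finset.range m, P k := by
    intro m
    induction m with
    | zero => simp [hP0]
    | succ m ih =>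
        rw [hPs, derivative_sub, derivative_C, sub_zero, derivative_pow, ih,
          Finset.prod_range_succ]
        push_cast
        ring_nf
        simp [C_mul, pow_succ]
        ring
  have hcoeff1 : ∀ m, 1 ≤ m → (P m).coeff 1 = 0 := by
    intro m hm
    induction m, hm using Nat.le_induction with
    | base => rw [hPs, hP0]; simp
    | succ m hm ih =>
        rw [hPs, coeff_sub, coeff_C, sq, coeff_mul,
          Finset.Nat.sum_antidiagonal_eq_sum_range_succ_mk]
        simp [Finset.sum_range_succ, ih]
  have hcoeff2 : ∀ m, 1 ≤ m →
      (P (m + 1)).coeff 2 = 2 * (P m).coeff 0 * (P m).coeff 2 := by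
    intro m hm
    rw [hPs, coeff_sub, coeff_C, sq, coeff_mul,
      Finset.Nat.sum_antidiagonal_eq_sum_range_succ_mk]
    simp [Finset.sum_range_succ, hcoeff1 m hm]
    ring
  -- minimality consequences
  have hnp2 : 2 ≤ np := by
    by_contra h
    have h1 : np = 1 := by omega
    have hc : (P 1).coeff 0 = -(ν : ℤ) := by
      rw [hPs, hP0]; simp
    rw [h1, hc] at hnpdvd
    have : (p : ℤ) ∣ (ν : ℤ) := (dvd_neg).mp hnpdvd
    exact hpν (by exact_mod_cast this)
  have hCne : ∀ m, 1 ≤ m → m < np → ¬ (p : ℤ) ∣ (P m).coeff 0 := by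
    intro m h1 h2 hdvd
    exact absurd (hnpleast m h1 hdvd) (by omega)
  have hprime : Prime (p : ℤ) := Int.prime_iff_natAbs_prime.mpr (by simpa using hpP)
  have hD : ∀ m, 1 ≤ m → m ≤ np → ¬ (p : ℤ) ∣ (P m).coeff 2 := by
    intro m hm
    induction m, hm using Nat.le_induction with
    | base =>
        intro _ h
        rw [hPs, hP0] at h
        simp at h
        exact hprime.not_unit (isUnit_of_dvd_one h)
    | succ m hm ih =>
        intro hle hdvd
        rw [hcoeff2 m hm] at hdvd
        rcases hprime.dvd_mul.mp hdvd with h | h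
        · rcases hprime.dvd_mul.mp h with h | h
          · exact hpodd h
          · exact hCne m hm (by omega) h
        · exact ih (by omega) h
  -- pass to the algebraic closure
  set i : ℤ →+* ZMod p := Int.castRingHom (ZMod p) with hi
  let L := AlgebraicClosure (ZMod p)
  set jK : ZMod p →+* L := algebraMap (ZMod p) L with hjK
  set ψ : ℤ →+* L := jK.comp i with hψ
  have hjinj : Function.Injective jK := jK.injective
  set PL : ℕ → L[X] := fun m => (P m).map ψ with hPLdef
  set c : ℕ → L := fun m => (PL m).eval 0 with hcdef
  have hPL0 : PL 0 = X := by simp [hPLdef, hP0]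
  have hPLcomp : ∀ a b, PL (a + b) = (PL b).comp (PL a) := by
    intro a b
    simp [hPLdef, hcomp a b, Polynomial.map_comp]
  have hceval : ∀ a b, (PL b).eval (c a) = c (a + b) := by
    intro a b
    simp [hcdef, hPLcomp a b, eval_comp]
  have hcast : ∀ (m : ℕ), c m = jK (((P m).coeff 0 : ℤ) : ZMod p) := by
    intro m
    simp [hcdef, hPLdef, ← coeff_zero_eq_eval_zero, coeff_map, hψ]
  have hi' : ∀ x : ℤ, i x = ((x : ZMod p)) := fun x => rfl
  have hψC0 : ψ ((P np).coeff 0) = 0 := by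
    have h0 : (((P np).coeff 0 : ℤ) : ZMod p) = 0 :=
      (ZMod.intCast_zmod_eq_zero_iff_dvd _ p).mpr hnpdvd
    rw [hψ, RingHom.comp_apply, hi', h0, map_zero]
  have hcnp : c np = 0 := by
    rw [hcast np, (ZMod.intCast_zmod_eq_zero_iff_dvd _ p).mpr hnpdvd, map_zero]
  have hcper : ∀ m, c (np + m) = c m := by
    intro m
    have h := hceval np m
    rw [hcnp] at h
    exact h.symm
  have hcne : ∀ m, 1 ≤ m → m < np → c m ≠ 0 := by
    intro m h1 h2 h0
    rw [hcast m] at h0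
    have : (((P m).coeff 0 : ℤ) : ZMod p) = 0 := hjinj (by simpa using h0)
    exact hCne m h1 h2 ((ZMod.intCast_zmod_eq_zero_iff_dvd _ p).mp this)
  have hDne : ψ ((P np).coeff 2) ≠ 0 := by
    intro h0
    have : (((P np).coeff 2 : ℤ) : ZMod p) = 0 := hjinj (by simpa [hψ] using h0)
    exact hD np hnp1 le_rfl ((ZMod.intCast_zmod_eq_zero_iff_dvd _ p).mp this)
  have h2ne : ∀ m : ℕ, ψ ((2 : ℤ) ^ m) ≠ 0 := by
    intro m h0
    rw [hψ, RingHom.comp_apply, hi'] at h0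
    have h2 : (((2 : ℤ) ^ m : ℤ) : ZMod p) = 0 := hjinj (by rw [h0, map_zero])
    have := (ZMod.intCast_zmod_eq_zero_iff_dvd _ p).mp h2
    exact hpodd (hprime.dvd_of_dvd_pow this)
  have hPLderiv : ∀ m, derivative (PL m) =
      C (ψ ((2 : ℤ) ^ m)) * ∏ k ∈ Finset.range m, PL k := by
    intro m
    simp only [hPLdef]
    rw [derivative_map, hderiv m, Polynomial.map_mul, map_C, Polynomial.map_prod]
  -- the polynomial in question
  set DK : ZMod p := (((P np).coeff 2 : ℤ) : ZMod p) with hDK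
  set QK : (ZMod p)[X] := ((P n).map i) ^ 2 *
      ((Rnp.map i).comp ((P n).map i)) + C DK with hQK
  show Squarefree QK
  set hL : L[X] := (Rnp.map ψ) * X ^ 2 + C (ψ ((P np).coeff 2)) with hLdef
  have hhL0 : hL.eval 0 = ψ ((P np).coeff 2) := by simp [hLdef]
  have hQmap : QK.map jK = hL.comp (PL n) := by
    rw [hQK, hLdef]
    simp only [Polynomial.map_add, Polynomial.map_mul, Polynomial.map_pow,
      Polynomial.map_comp, map_C, Polynomial.map_map, add_comp, mul_comp, pow_comp, X_comp,
      C_comp, hPLdef, hψ]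
    rw [show jK DK = (jK.comp i) ((P np).coeff 2) from rfl]
    ring
  have hg : PL np = X ^ 2 * hL := by
    have := congrArg (Polynomial.map ψ) hRnp
    simp only [Polynomial.map_add, Polynomial.map_mul, Polynomial.map_pow, map_C,
      Polynomial.map_X, hψC0, map_zero] at this
    show Polynomial.map ψ (P np) = X ^ 2 * hL
    rw [this, hLdef]
    ring
  -- the key fact: no common root of Q and its derivative in the closure
  have key : ∀ α : L, (QK.map jK).eval α = 0 → ((QK.map jK).derivative).eval α = 0 → False := by
    intro α hval hder
    set β := (PL n).eval α with hβ
    have hhβ : hL.eval β = 0 := by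
      rw [hQmap, eval_comp] at hval
      exact hval
    have hβne : β ≠ 0 := by
      intro h0
      rw [h0, hhL0] at hhβ
      exact hDne hhβ
    have hder' : (derivative (PL n)).eval α * (derivative hL).eval β = 0 := by
      rw [hQmap, derivative_comp] at hder
      simpa [eval_mul, eval_comp, mul_comm] using hder
    rcases mul_eq_zero.mp hder' with h | h
    · -- some earlier iterate vanishes at α
      rw [hPLderiv n] at h
      simp only [eval_mul, eval_C, eval_prod] at h
      rcases mul_eq_zero.mp h with h' | h'
      · exact h2ne n h'
      · obtain ⟨k, hk, hk0⟩ := Finset.prod_eq_zero_iff.mp h'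
        have hkn : k < n := Finset.mem_range.mp hk
        have hβc : β = c (n - k) := by
          have hsplit : PL n = (PL (n - k)).comp (PL k) := by
            rw [← hPLcomp k (n - k), Nat.add_sub_cancel' (le_of_lt hkn)]
          rw [hβ, hsplit, eval_comp, hk0]
        have h1 : (PL np).eval β = 0 := by
          rw [hg]
          simp [hhβ]
        rw [hβc, hceval (n - k) np] at h1
        have : c (n - k) = 0 := by
          rw [← hcper (n - k), Nat.add_comm, h1]
        rw [hβc, this] at hβne
        exact hβne rfl
    · -- β is a repeated root of the np-th iterate
      have hgβ : (PL np).eval β = 0 := by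
        rw [hg]
        simp [hhβ]
      have hgder : (derivative (PL np)).eval β = 0 := by
        rw [hg]
        simp [derivative_mul, hhβ, h]
      rw [hPLderiv np] at hgder
      simp only [eval_mul, eval_C, eval_prod] at hgder
      rcases mul_eq_zero.mp hgder with h' | h'
      · exact h2ne np h'
      · obtain ⟨k, hk, hk0⟩ := Finset.prod_eq_zero_iff.mp h'
        have hkn : k < np := Finset.mem_range.mp hk
        rcases Nat.eq_zero_or_pos k with hk0' | hk1
        · rw [hk0', hPL0] at hk0
          exact hβne (by simpa using hk0)
        · have hsplit : PL np = (PL (np - k)).comp (PL k) := by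
            rw [← hPLcomp k (np - k), Nat.add_sub_cancel' (le_of_lt hkn)]
          rw [hsplit, eval_comp, hk0] at hgβ
          exact hcne (np - k) (by omega) (by omega) hgβ
  -- Q is nonzero
  have hQLne : QK.map jK ≠ 0 := by
    rw [hQmap]
    intro h0
    rcases comp_eq_zero_iff.mp h0 with h1 | ⟨h1, h2⟩
    · rw [h1] at hhL0
      exact hDne (by simpa using hhL0.symm)
    · have hnd : (PL n).natDegree = (P n).natDegree := (hmonic n).1.natDegree_map ψ
      rw [h2, natDegree_C] at hnd
      have := (hmonic n).2
      omega
  have hQKne : QK ≠ 0 := by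
    intro h0
    rw [h0, Polynomial.map_zero] at hQLne
    exact hQLne rfl
  -- conclude squarefreeness
  intro a ha
  by_contra hu
  have haz : a ≠ 0 := by
    intro h0
    rw [h0, mul_zero] at ha
    exact hQKne (zero_dvd_iff.mp ha)
  have hdeg : (a.map jK).degree ≠ 0 := by
    rw [Polynomial.degree_map]
    exact fun hd => hu (isUnit_iff_degree_eq_zero.mpr hd)
  obtain ⟨α, hα⟩ := IsAlgClosed.exists_root (a.map jK) hdeg
  have hα' : (a.map jK).eval α = 0 := hα
  obtain ⟨b, hb⟩ := ha
  have hval : (QK.map jK).eval α = 0 := by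
    rw [hb, Polynomial.map_mul, Polynomial.map_mul]
    simp [hα']
  have hder : ((QK.map jK).derivative).eval α = 0 := by
    rw [hb, Polynomial.map_mul, Polynomial.map_mul]
    simp [derivative_mul, hα']
  exact key α hval hder
end

section
/- Let ν ≥ 3 be a square-free integer with ν ≡ 2 or 3 (mod 4). Define real numbers by x₀ = 0 and x_{k+1} = √(ν + x_k) (positive square root). Let n ≥ 1 and let p be a prime divisor of ν. Then for every maximal ideal 𝒫 of ℤ[x_n] lying over pℤ (i.e. with 𝒫 ∩ ℤ = pℤ), the localization of ℤ[x_n] at 𝒫 is a discrete valuation ring. -/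
set_option maxHeartbeats 1000000
set_option synthInstance.maxHeartbeats 400000

lemma adjoin_rep (t : ℝ) (a : Algebra.adjoin ℤ ({t} : Set ℝ)) :
    ∃ (c : Algebra.adjoin ℤ ({t} : Set ℝ)) (m : ℤ),
      a = c * ⟨t, Algebra.self_mem_adjoin_singleton ℤ t⟩
          + (m : Algebra.adjoin ℤ ({t} : Set ℝ)) := by
  obtain ⟨a, ha0⟩ := a
  induction ha0 using Algebra.adjoin_induction with
  | mem s hs =>
    rcases hs with rfl
    exact ⟨1, 0, by simp⟩
  | algebraMap r => exact ⟨0, r, by ext; simp⟩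
  | add a b ha' hb' ha hb =>
    obtain ⟨c1, m1, h1⟩ := ha
    obtain ⟨c2, m2, h2⟩ := hb
    exact ⟨c1 + c2, m1 + m2, by
      rw [show (⟨a + b, add_mem ha' hb'⟩ : Algebra.adjoin ℤ ({t} : Set ℝ)) = ⟨a, ha'⟩ + ⟨b, hb'⟩ from rfl, h1, h2]; push_cast; ring⟩
  | mul a b ha' hb' ha hb =>
    obtain ⟨c1, m1, h1⟩ := ha
    obtain ⟨c2, m2, h2⟩ := hb
    exact ⟨c1 * c2 * ⟨t, Algebra.self_mem_adjoin_singleton ℤ t⟩ + c1 * (m2 : _) + c2 * (m1 : _),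
      m1 * m2, by
      rw [show (⟨a * b, mul_mem ha' hb'⟩ : Algebra.adjoin ℤ ({t} : Set ℝ)) = ⟨a, ha'⟩ * ⟨b, hb'⟩ from rfl, h1, h2]; push_cast; ring⟩

theorem dvr_aux {R : Type*} [CommRing R] [IsDomain R] [IsNoetherianRing R]
    (ξ : R) (hξ : ξ ≠ 0)
    (hgen : ∀ a : R, ∃ (c : R) (m : ℤ), a = c * ξ + (m : R))
    (p : ℤ)
    (𝓟 : Ideal R) [𝓟.IsMaximal]
    (hintP : ∀ m : ℤ, (m : R) ∈ 𝓟 → p ∣ m)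
    (hξmem : ξ ∈ 𝓟)
    (u : ℤ) (hpu : ¬ p ∣ u) (h : R) (hrel : (p : R) * (u : R) = ξ * h) :
    IsDiscreteValuationRing (Localization.AtPrime 𝓟) := by
  haveI hprime : 𝓟.IsPrime := Ideal.IsMaximal.isPrime ‹_›
  haveI : IsNoetherianRing (Localization.AtPrime 𝓟) :=
    IsLocalization.isNoetherianRing 𝓟.primeCompl _ ‹_›
  let L := Localization.AtPrime 𝓟
  let f := algebraMap R L
  have hinj : Function.Injective f :=
    IsLocalization.injective L 𝓟.primeCompl_le_nonZeroDivisors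
  have hξ' : f ξ ∈ IsLocalRing.maximalIdeal L := by
    rw [← Localization.AtPrime.map_eq_maximalIdeal]
    exact Ideal.mem_map_of_mem f hξmem
  have hξ'0 : f ξ ≠ 0 := fun h0 => hξ (hinj (by rw [h0, map_zero]))
  have hnf : ¬ IsField L := by
    intro hf
    rw [IsLocalRing.isField_iff_maximalIdeal_eq] at hf
    rw [hf] at hξ'
    exact hξ'0 hξ'
  have humem : (u : R) ∈ 𝓟.primeCompl := fun hu => hpu (hintP u hu)
  have huu : IsUnit (f (u : R)) := IsLocalization.map_units L ⟨(u : R), humem⟩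
  have hpspan : (f ((p : ℤ) : R)) ∈ Ideal.span {f ξ} := by
    rw [Ideal.mem_span_singleton]
    obtain ⟨v, hv⟩ := huu.exists_left_inv
    have h1 : f ((p : ℤ) : R) * f ((u : ℤ) : R) = f ξ * f h := by
      rw [← map_mul, ← map_mul, hrel]
    exact ⟨f h * v, by linear_combination v * h1 - f ((p : ℤ) : R) * hv⟩
  have hmax : IsLocalRing.maximalIdeal L = Ideal.span {f ξ} := by
    rw [← Localization.AtPrime.map_eq_maximalIdeal]
    apply le_antisymm
    · rw [Ideal.map_le_iff_le_comap]
      intro z hz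
      obtain ⟨c, m, hcm⟩ := hgen z
      have hm : ((m : ℤ) : R) ∈ 𝓟 := by
        have he : ((m : ℤ) : R) = z - c * ξ := by rw [hcm]; ring
        rw [he]
        exact Ideal.sub_mem _ hz (Ideal.mul_mem_left _ _ hξmem)
      obtain ⟨d, hd⟩ := hintP m hm
      simp only [Ideal.mem_comap]
      have hz' : f z = f c * f ξ + f ((d : ℤ) : R) * f ((p : ℤ) : R) := by
        rw [← map_mul, ← map_mul, ← map_add]
        congr 1
        rw [hcm, hd]
        push_cast
        ring
      rw [hz']
      exact Ideal.add_mem _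
        (Ideal.mul_mem_left _ _ (Ideal.mem_span_singleton_self _))
        (Ideal.mul_mem_left _ _ hpspan)
    · rw [Ideal.span_le, Set.singleton_subset_iff]
      exact Ideal.mem_map_of_mem f hξmem
  have hpr : (IsLocalRing.maximalIdeal L).IsPrincipal := ⟨f ξ, hmax⟩
  exact ((IsDiscreteValuationRing.TFAE L hnf).out 0 4).mpr hpr

/-- Let `ν ≥ 3` be a square-free integer with `ν ≡ 2` or `3 (mod 4)`, and let `x 0 = 0`,
`x (k+1) = √(ν + x k)`.  Let `n ≥ 1` and let `p` be a prime divisor of `ν`.  Then for every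
maximal ideal `𝓟` of `ℤ[xₙ]` lying over `pℤ`, the localization of `ℤ[xₙ]` at `𝓟` is a
discrete valuation ring. -/
theorem localization_dvr_of_prime_dvd_nu
    (ν : ℕ) (hν3 : 3 ≤ ν) (hsf : Squarefree ν) (hmod : ν % 4 = 2 ∨ ν % 4 = 3)
    (x : ℕ → ℝ) (hx0 : x 0 = 0)
    (hxs : ∀ k, x (k + 1) = Real.sqrt (ν + x k))
    (n : ℕ) (hn : 1 ≤ n)
    (p : ℕ) (hp : p.Prime) (hpν : p ∣ ν)
    (𝓟 : Ideal (Algebra.adjoin ℤ {x n})) [𝓟.IsMaximal]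
    (h𝓟p : 𝓟.comap (algebraMap ℤ (Algebra.adjoin ℤ {x n})) = Ideal.span {(p : ℤ)}) :
    IsDiscreteValuationRing (Localization.AtPrime 𝓟) := by
  classical
  let ξ : Algebra.adjoin ℤ ({x n} : Set ℝ) :=
    ⟨x n, Algebra.self_mem_adjoin_singleton ℤ (x n)⟩
  -- Noetherian instance
  haveI hft : Algebra.FiniteType ℤ (Algebra.adjoin ℤ ({x n} : Set ℝ)) :=
    (Subalgebra.fg_iff_finiteType _).mp ⟨{x n}, by simp⟩
  haveI : IsNoetherianRing (Algebra.adjoin ℤ ({x n} : Set ℝ)) :=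
    Algebra.FiniteType.isNoetherianRing ℤ _
  -- basic real facts
  have hxnn : ∀ k, 0 ≤ x k := by
    intro k; cases k with
    | zero => rw [hx0]
    | succ k => rw [hxs]; exact Real.sqrt_nonneg _
  have hsq : ∀ k, x (k + 1) ^ 2 = ν + x k := by
    intro k
    rw [hxs k, Real.sq_sqrt]
    have h1 := hxnn k
    have h2 : (0:ℝ) ≤ ν := Nat.cast_nonneg ν
    linarith
  have hxn_ne : x n ≠ 0 := by
    obtain ⟨m, rfl⟩ := Nat.exists_eq_add_of_le hn
    rw [add_comm, hxs m]
    have hpos : (0:ℝ) < ν + x m := by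
      have h1 := hxnn m
      have h2 : (3:ℝ) ≤ ν := by exact_mod_cast hν3
      linarith
    exact ne_of_gt (Real.sqrt_pos.mpr hpos)
  have hξ0 : ξ ≠ 0 := fun h0 => hxn_ne (congrArg Subtype.val h0)
  -- ν = p * m₀ with p ∤ m₀
  obtain ⟨m₀, hm₀⟩ := hpν
  have hpm₀ : ¬ p ∣ m₀ := by
    rintro ⟨c, hc⟩
    exact hp.not_isUnit (hsf p ⟨c, by rw [hm₀, hc]; ring⟩)
  -- the iteration in A
  let y : ℕ → Algebra.adjoin ℤ ({x n} : Set ℝ) :=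
    fun k => Nat.rec ξ (fun _ yk => yk ^ 2 - (ν : Algebra.adjoin ℤ ({x n} : Set ℝ))) k
  have hy0 : y 0 = ξ := rfl
  have hys : ∀ k, y (k + 1) = y k ^ 2 - (ν : Algebra.adjoin ℤ ({x n} : Set ℝ)) := fun k => rfl
  have hyval : ∀ k, k ≤ n → (y k).val = x (n - k) := by
    intro k hk
    induction k with
    | zero => rw [Nat.sub_zero]; rfl
    | succ k ih =>
      have hk' : k ≤ n := le_of_lt (Nat.lt_of_succ_le hk)
      have h1 : n - k = (n - (k+1)) + 1 := by omega
      have hv : (y (k+1)).val = (y k).val ^ 2 - (ν : ℝ) := by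
        rw [hys k]
        push_cast
        ring
      rw [hv, ih hk', h1, hsq]
      ring
  have hyn : y n = 0 := by
    refine Subtype.ext ?_
    have hv := hyval n le_rfl
    simp only [Nat.sub_self, hx0] at hv
    simpa using hv
  -- integer iteration
  let F : ℕ → ℤ := fun k => Nat.rec 0 (fun _ fk => fk ^ 2 - (ν : ℤ)) k
  have hF0 : F 0 = 0 := rfl
  have hFs : ∀ k, F (k + 1) = F k ^ 2 - (ν : ℤ) := fun k => rfl
  have hFval : ∀ k, 1 ≤ k → ∃ u : ℤ, F k = p * u ∧ ¬ (p:ℤ) ∣ u := by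
    intro k hk
    induction k with
    | zero => omega
    | succ k ih =>
      rcases Nat.eq_or_lt_of_le hk with hk1 | hk1
      · refine ⟨-m₀, ?_, ?_⟩
        · have hk0 : k = 0 := by omega
          subst hk0
          rw [hFs, hF0, hm₀]; push_cast; ring
        · rw [Int.dvd_neg]; exact_mod_cast hpm₀
      · obtain ⟨u, hu, hpu⟩ := ih (by omega)
        refine ⟨p * u ^ 2 - m₀, ?_, ?_⟩
        · rw [hFs, hu, hm₀]; push_cast; ring
        · rintro ⟨c, hc⟩
          apply hpm₀
          have hd : (p:ℤ) ∣ (m₀:ℤ) :=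
            ⟨u ^ 2 - c, by rw [mul_sub, ← hc]; ring⟩
          exact_mod_cast hd
  -- y k = ξ * h + F k
  have hyrep : ∀ k, ∃ h : Algebra.adjoin ℤ ({x n} : Set ℝ),
      y k = ξ * h + (Int.cast (F k) : Algebra.adjoin ℤ ({x n} : Set ℝ)) := by
    intro k
    induction k with
    | zero => exact ⟨1, by rw [hy0, hF0]; push_cast; ring⟩
    | succ k ih =>
      obtain ⟨h, hh⟩ := ih
      refine ⟨ξ * h ^ 2 + 2 * h * (Int.cast (F k) : Algebra.adjoin ℤ ({x n} : Set ℝ)), ?_⟩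
      rw [hys, hFs, hh]
      push_cast
      ring
  -- y k = ξ^(2^k) + p * a
  have hypow : ∀ k, ∃ a : Algebra.adjoin ℤ ({x n} : Set ℝ),
      y k = ξ ^ (2 ^ k) + (p : Algebra.adjoin ℤ ({x n} : Set ℝ)) * a := by
    intro k
    induction k with
    | zero => exact ⟨0, by rw [hy0]; push_cast; ring⟩
    | succ k ih =>
      obtain ⟨a, ha⟩ := ih
      refine ⟨2 * ξ ^ (2 ^ k) * a + (p : Algebra.adjoin ℤ ({x n} : Set ℝ)) * a ^ 2
        - (m₀ : Algebra.adjoin ℤ ({x n} : Set ℝ)), ?_⟩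
      have h2 : ξ ^ (2 ^ (k+1)) = (ξ ^ 2 ^ k) ^ 2 := by
        rw [← pow_mul, pow_succ]
      have hν' : (ν : Algebra.adjoin ℤ ({x n} : Set ℝ))
          = (p : Algebra.adjoin ℤ ({x n} : Set ℝ)) * (m₀ : Algebra.adjoin ℤ ({x n} : Set ℝ)) := by
        rw [hm₀]; push_cast; ring
      rw [hys, ha, hν', h2]
      ring
  -- p ∈ 𝓟
  have hpmem : (Int.cast ((p:ℕ):ℤ) : Algebra.adjoin ℤ ({x n} : Set ℝ)) ∈ 𝓟 := by
    have hmem : ((p:ℕ):ℤ) ∈ Ideal.span {((p:ℕ):ℤ)} := Ideal.mem_span_singleton_self _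
    rw [← h𝓟p] at hmem
    simpa [Ideal.mem_comap, algebraMap_int_eq] using hmem
  -- integers of 𝓟
  have hintP : ∀ m : ℤ, (Int.cast m : Algebra.adjoin ℤ ({x n} : Set ℝ)) ∈ 𝓟 → ((p:ℕ):ℤ) ∣ m := by
    intro m hm
    have hmem : m ∈ Ideal.comap (algebraMap ℤ (Algebra.adjoin ℤ ({x n} : Set ℝ))) 𝓟 := by
      simpa [Ideal.mem_comap, algebraMap_int_eq] using hm
    rw [h𝓟p, Ideal.mem_span_singleton] at hmem
    exact hmem
  -- ξ ∈ 𝓟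
  have hξmem : ξ ∈ 𝓟 := by
    obtain ⟨a, ha⟩ := hypow n
    have hz : ξ ^ (2 ^ n) = -((p : Algebra.adjoin ℤ ({x n} : Set ℝ)) * a) := by
      have h0 := hyn
      rw [ha] at h0
      linear_combination h0
    have hpow : ξ ^ (2 ^ n) ∈ 𝓟 := by
      rw [hz]
      refine neg_mem (Ideal.mul_mem_right _ _ ?_)
      have : ((p:ℕ) : Algebra.adjoin ℤ ({x n} : Set ℝ))
          = (Int.cast ((p:ℕ):ℤ) : Algebra.adjoin ℤ ({x n} : Set ℝ)) := by push_cast; ring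
      rw [this]
      exact hpmem
    exact (Ideal.IsMaximal.isPrime ‹_›).mem_of_pow_mem _ hpow
  -- Eisenstein relation
  obtain ⟨u, hFu, hpu⟩ := hFval n hn
  obtain ⟨h, hh⟩ := hyrep n
  have hrel : (Int.cast ((p:ℕ):ℤ) : Algebra.adjoin ℤ ({x n} : Set ℝ))
      * (Int.cast u : Algebra.adjoin ℤ ({x n} : Set ℝ)) = ξ * (-h) := by
    have h0 := hyn
    rw [hh, hFu] at h0
    push_cast at h0 ⊢
    linear_combination h0
  -- generation
  have hgen : ∀ a : Algebra.adjoin ℤ ({x n} : Set ℝ),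
      ∃ (c : Algebra.adjoin ℤ ({x n} : Set ℝ)) (m : ℤ),
        a = c * ξ + (Int.cast m : Algebra.adjoin ℤ ({x n} : Set ℝ)) := by
    intro a
    exact adjoin_rep (x n) a
  exact dvr_aux ξ hξ0 hgen ((p:ℕ):ℤ) 𝓟 hintP hξmem u hpu (-h) hrel
end

section
/- Let ν ≥ 3 be a square-free integer with ν ≡ 2 or 3 (mod 4). Define real numbers by x₀ = 0 and x_{k+1} = √(ν + x_k) (positive square root). Let n ≥ 1. Then for every maximal ideal 𝒫 of ℤ[x_n] lying over 2ℤ (i.e. with 𝒫 ∩ ℤ = 2ℤ), the localization of ℤ[x_n] at 𝒫 is a discrete valuation ring. -/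
open Polynomial

noncomputable def iterPoly (ν : ℤ) : ℕ → ℤ[X] :=
  fun n => ((fun q : ℤ[X] => q ^ 2 - C ν)^[n]) X

lemma iterPoly_zero (ν : ℤ) : iterPoly ν 0 = X := rfl

lemma iterPoly_succ (ν : ℤ) (n : ℕ) :
    iterPoly ν (n + 1) = (iterPoly ν n) ^ 2 - C ν := by
  simp [iterPoly, Function.iterate_succ_apply']

lemma iterPoly_monic (ν : ℤ) (n : ℕ) :
    (iterPoly ν n).Monic ∧ (iterPoly ν n).natDegree = 2 ^ n := by
  induction n with
  | zero => simp [iterPoly_zero, monic_X]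
  | succ k ih =>
    obtain ⟨hm, hd⟩ := ih
    have hm2 : ((iterPoly ν k) ^ 2).Monic := hm.pow 2
    have hd2 : ((iterPoly ν k) ^ 2).natDegree = 2 ^ (k + 1) := by
      rw [natDegree_pow, hd]; ring
    have hdeg : degree (-C ν) < ((iterPoly ν k) ^ 2).degree := by
      apply lt_of_le_of_lt (degree_neg (C ν) ▸ degree_C_le)
      rw [← natDegree_pos_iff_degree_pos, hd2]
      positivity
    constructor
    · rw [iterPoly_succ, sub_eq_add_neg]
      exact hm2.add_of_left hdeg
    · rw [iterPoly_succ, natDegree_sub_C, hd2]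

lemma iterPoly_map_two (ν : ℤ) (n : ℕ) :
    (iterPoly ν n).map (Int.castRingHom (ZMod 2))
      = X ^ 2 ^ n + C ((ν : ZMod 2) * (n : ZMod 2)) := by
  induction n with
  | zero => simp [iterPoly_zero]
  | succ k ih =>
    have hsq : ∀ a : ZMod 2, a ^ 2 = a := by decide
    have hneg : ∀ a : ZMod 2, -a = a := by decide
    rw [iterPoly_succ, Polynomial.map_sub, Polynomial.map_pow, ih, map_C]
    rw [add_pow_char]
    rw [← pow_mul, ← C_pow, hsq]
    have hsub : ∀ a b : ZMod 2, a - b = a + b := by decide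
    have hcast : ((Int.castRingHom (ZMod 2)) ν) = (ν : ZMod 2) := rfl
    rw [hcast, add_sub_assoc, ← C_sub, hsub, pow_succ]
    push_cast
    ring_nf

lemma intCast_zmod4_eq_two {a : ℤ} (h : (a : ZMod 4) = 2) : a % 4 = 2 := by
  have h0 : ((a - 2 : ℤ) : ZMod 4) = 0 := by push_cast [h]; ring
  have h4 : ((4 : ℕ) : ℤ) ∣ (a - 2) := (ZMod.intCast_zmod_eq_zero_iff_dvd _ _).mp h0
  omega

lemma iterPoly_eval_mod_four (ν : ℤ) (n : ℕ) (hn : 1 ≤ n)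
    (hmod : ν % 4 = 2 ∨ ν % 4 = 3) :
    ((iterPoly ν n).eval (-(ν * ((n % 2 : ℕ) : ℤ)))) % 4 = 2 := by
  set t : ℤ := -(ν * ((n % 2 : ℕ) : ℤ)) with ht
  have hstep : ∀ k, (((iterPoly ν (k+1)).eval t : ℤ) : ZMod 4)
      = (((iterPoly ν k).eval t : ℤ) : ZMod 4) ^ 2 - ((ν : ℤ) : ZMod 4) := by
    intro k; rw [iterPoly_succ]; push_cast [eval_sub, eval_pow, eval_C]; ring
  have hcast : ∀ b : ℤ, ((b : ℤ) : ZMod 4) = (((b % 4 : ℤ)) : ZMod 4) := by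
    intro b
    have : ((4 : ℕ) : ℤ) ∣ (b - b % 4) := by omega
    have := (ZMod.intCast_zmod_eq_zero_iff_dvd _ _).mpr this
    push_cast at this
    linear_combination this
  rcases hmod with h2 | h3
  · have hν : ((ν : ℤ) : ZMod 4) = 2 := by rw [hcast, h2]; norm_num
    have ht4 : ((t : ℤ) : ZMod 4) = 0 ∨ ((t : ℤ) : ZMod 4) = 2 := by
      have hn2 : n % 2 = 0 ∨ n % 2 = 1 := by omega
      rcases hn2 with h | h
      · left; rw [ht, h]; push_cast; ring
      · right; rw [ht, h, hcast]
        push_cast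
        have : (-(ν * 1)) % 4 = 2 := by omega
        rw [this]; norm_num
    have key : ∀ k, 1 ≤ k → (((iterPoly ν k).eval t : ℤ) : ZMod 4) = 2 := by
      intro k hk
      induction k with
      | zero => omega
      | succ m ih =>
        rcases Nat.eq_zero_or_pos m with rfl | hm
        · rw [hstep, iterPoly_zero, eval_X, hν]
          rcases ht4 with h | h <;> rw [h] <;> decide
        · rw [hstep, ih hm, hν]; decide
    exact intCast_zmod4_eq_two (key n hn)
  · have hν : ((ν : ℤ) : ZMod 4) = 3 := by rw [hcast, h3]; norm_num
    have key : ∀ k, 1 ≤ k →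
        (k % 2 = n % 2 → (((iterPoly ν k).eval t : ℤ) : ZMod 4) = 2) ∧
        (k % 2 ≠ n % 2 → (((iterPoly ν k).eval t : ℤ) : ZMod 4) = 1) := by
      intro k hk
      induction k with
      | zero => omega
      | succ m ih =>
        rcases Nat.eq_zero_or_pos m with rfl | hm
        · have h1 : (((iterPoly ν 1).eval t : ℤ) : ZMod 4)
              = ((t : ℤ) : ZMod 4) ^ 2 - 3 := by rw [hstep, iterPoly_zero, eval_X, hν]
          have hn2 : n % 2 = 0 ∨ n % 2 = 1 := by omega
          rcases hn2 with h | h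
          · constructor
            · intro hcontra; omega
            · intro _
              have ht0 : ((t : ℤ) : ZMod 4) = 0 := by rw [ht, h]; push_cast; ring
              rw [h1, ht0]; decide
          · constructor
            · intro _
              have ht1 : ((t : ℤ) : ZMod 4) = 1 := by
                rw [ht, h, hcast]; push_cast
                have : (-(ν * 1)) % 4 = 1 := by omega
                rw [this]; norm_num
              rw [h1, ht1]; decide
            · intro hcontra; omega
        · obtain ⟨ih2, ih1⟩ := ih hm
          by_cases hpar : m % 2 = n % 2
          · constructor
            · intro hcontra; omega
            · intro _; rw [hstep, ih2 hpar, hν]; decide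
          · constructor
            · intro _; rw [hstep, ih1 hpar, hν]; decide
            · intro hcontra; omega
    exact intCast_zmod4_eq_two ((key n hn).1 rfl)

set_option maxHeartbeats 4000000 in
set_option synthInstance.maxHeartbeats 400000 in
/-- Let `ν ≥ 3` be a square-free integer with `ν ≡ 2` or `3 (mod 4)`, and let `x 0 = 0`,
`x (k+1) = √(ν + x k)`.  Let `n ≥ 1`.  Then for every maximal ideal `𝓟` of `ℤ[xₙ]` lying
over `2ℤ`, the localization of `ℤ[xₙ]` at `𝓟` is a discrete valuation ring. -/
theorem localization_dvr_at_two
    (ν : ℕ) (hν3 : 3 ≤ ν) (hsf : Squarefree ν) (hmod : ν % 4 = 2 ∨ ν % 4 = 3)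
    (x : ℕ → ℝ) (hx0 : x 0 = 0)
    (hxs : ∀ k, x (k + 1) = Real.sqrt (ν + x k))
    (n : ℕ) (hn : 1 ≤ n)
    (𝓟 : Ideal (Algebra.adjoin ℤ {x n})) [𝓟.IsMaximal]
    (h𝓟p : 𝓟.comap (algebraMap ℤ (Algebra.adjoin ℤ {x n})) = Ideal.span {(2 : ℤ)}) :
    IsDiscreteValuationRing (Localization.AtPrime 𝓟) := by
  -- nonnegativity and square relation
  have hxnn : ∀ k, 0 ≤ x k := by
    intro k; cases k with
    | zero => rw [hx0]
    | succ m => rw [hxs]; exact Real.sqrt_nonneg _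
  have hsq : ∀ k, x (k + 1) ^ 2 = ν + x k := by
    intro k; rw [hxs]
    exact Real.sq_sqrt (add_nonneg (by positivity) (hxnn k))
  -- evaluation of iterates
  have heval : ∀ k, k ≤ n → Polynomial.aeval (x n) (iterPoly ν k) = x (n - k) := by
    intro k
    induction k with
    | zero => intro _; simp [iterPoly_zero]
    | succ m ih =>
      intro hm
      have hm' : m ≤ n := by omega
      rw [iterPoly_succ, map_sub, map_pow, ih hm', aeval_C]
      have h1 : n - m = (n - (m + 1)) + 1 := by omega
      rw [h1, hsq]
      push_cast
      ring
  -- the shift constant and shifted polynomial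
  set c : ℤ := (ν : ℤ) * ((n % 2 : ℕ) : ℤ) with hc
  set Q : ℤ[X] := (iterPoly ν n).comp (X - C c) with hQdef
  set N : ℕ := 2 ^ n with hNdef
  have hN2 : 2 ≤ N := by
    rw [hNdef]
    calc 2 = 2 ^ 1 := rfl
    _ ≤ 2 ^ n := Nat.pow_le_pow_right (by norm_num) hn
  -- evaluation of Q at the shifted root
  have hy : Polynomial.aeval (x n + (c : ℝ)) Q = 0 := by
    rw [hQdef, aeval_comp]
    have h1 : (Polynomial.aeval (x n + (c : ℝ))) (X - C c) = x n := by
      simp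
    rw [h1, heval n le_rfl]
    simp [hx0]
  -- monicity and degree of Q
  have hQmonic : Q.Monic := by
    rw [hQdef]
    exact (iterPoly_monic ν n).1.comp (monic_X_sub_C c) (by rw [natDegree_X_sub_C]; norm_num)
  have hQdeg : Q.natDegree = N := by
    rw [hQdef, natDegree_comp, natDegree_X_sub_C, (iterPoly_monic (ν : ℤ) n).2, mul_one, hNdef]
  -- reduction of Q mod 2
  have hQmap : Q.map (Int.castRingHom (ZMod 2)) = X ^ N := by
    have hpow2 : ∀ a : ZMod 2, a ^ 2 ^ n = a := by
      intro a
      have h01 : ∀ b : ZMod 2, b = 0 ∨ b = 1 := by decide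
      rcases h01 a with rfl | rfl
      · exact zero_pow (by positivity)
      · exact one_pow _
    have hcc : ((c : ℤ) : ZMod 2) = ((ν : ℤ) : ZMod 2) * (n : ZMod 2) := by
      have h2 : (((n % 2 : ℕ) : ℤ) : ZMod 2) = (n : ZMod 2) := by
        rw [Int.cast_natCast, ZMod.natCast_mod]
      rw [hc, Int.cast_mul, h2]
    rw [hQdef, Polynomial.map_comp, iterPoly_map_two, Polynomial.map_sub, map_X, map_C]
    have hcast : ((Int.castRingHom (ZMod 2)) c) = ((ν : ℤ) : ZMod 2) * (n : ZMod 2) := hcc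
    rw [hcast]
    set e : ZMod 2 := ((ν : ℤ) : ZMod 2) * (n : ZMod 2) with he
    rw [add_comp, X_pow_comp, C_comp]
    rw [sub_eq_add_neg, ← C_neg, add_pow_char_pow, hNdef]
    rw [← C_pow, hpow2]
    have : ∀ a : ZMod 2, -a = a := by decide
    rw [this]
    have : ∀ a : ZMod 2, a + a = 0 := by decide
    rw [add_assoc, ← C_add, this, C_0, add_zero]
  -- all non-leading coefficients of Q are even
  have hdvd : C (2 : ℤ) ∣ Q - X ^ N := by
    rw [C_dvd_iff_dvd_coeff]
    intro i
    have hco : ((Q.coeff i : ℤ) : ZMod 2) = (X ^ N : (ZMod 2)[X]).coeff i := by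
      rw [← hQmap, coeff_map]
      rfl
    by_cases hiN : i = N
    · subst hiN
      have h1 : Q.coeff N = 1 := by
        have := hQmonic
        rw [Polynomial.Monic, Polynomial.leadingCoeff, hQdeg] at this
        exact this
      rw [coeff_sub, h1, coeff_X_pow]
      simp
    · have h0 : ((Q.coeff i : ℤ) : ZMod 2) = 0 := by
        rw [hco, coeff_X_pow]
        simp [Ne.symm hiN, hiN]
      have h2 : ((2 : ℕ) : ℤ) ∣ Q.coeff i := (ZMod.intCast_zmod_eq_zero_iff_dvd _ _).mp h0
      rw [coeff_sub, coeff_X_pow, if_neg hiN, sub_zero]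
      simpa using h2
  obtain ⟨B, hB⟩ := hdvd
  have hQeq : Q = X ^ N + C 2 * B := by
    rw [← hB]; ring
  -- the constant coefficient
  have hconst : Q.coeff 0 % 4 = 2 := by
    have h1 : Q.coeff 0 = (iterPoly (ν : ℤ) n).eval (-c) := by
      rw [coeff_zero_eq_eval_zero, hQdef, eval_comp]
      simp
    rw [h1, hc]
    exact iterPoly_eval_mod_four (ν : ℤ) n hn (by omega)
  set u : ℤ := B.coeff 0 with hu
  have huodd : u % 2 = 1 := by
    have h2 : Q.coeff 0 = 2 * u := by
      rw [hQeq, coeff_add, coeff_X_pow, if_neg (by omega), coeff_C_mul, hu]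
      ring
    omega
  have hQeq2 : Q = X ^ N + C 2 * (C u + X * B.divX) := by
    rw [hQeq]
    conv_lhs => rw [← X_mul_divX_add B]
    rw [← hu]
    ring
  -- move to the subalgebra
  have hxmem : x n ∈ Algebra.adjoin ℤ {x n} := Algebra.subset_adjoin rfl
  set xR : Algebra.adjoin ℤ {x n} := ⟨x n, hxmem⟩ with hxR
  set yR : Algebra.adjoin ℤ {x n} := xR + (c : ℤ) with hyRdef
  have hyRcoe : (yR : ℝ) = x n + (c : ℝ) := by
    rw [hyRdef]
    push_cast
    simp [hxR]
  have hQyR : Polynomial.aeval yR Q = 0 := by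
    have h0 : ((Polynomial.aeval yR Q : Algebra.adjoin ℤ {x n}) : ℝ) = 0 := by
      rw [Polynomial.aeval_subalgebra_coe, hyRcoe, hy]
    exact Subtype.ext (by simpa using h0)
  set bR : Algebra.adjoin ℤ {x n} := Polynomial.aeval yR B.divX with hbR
  set U : Algebra.adjoin ℤ {x n} := ((u : ℤ) : Algebra.adjoin ℤ {x n}) with hU
  have hrel : yR ^ N + 2 * (U + yR * bR) = 0 := by
    have h0 := hQyR
    rw [hQeq2] at h0
    simpa [map_add, map_mul, map_pow, map_ofNat, hbR, hU] using h0
  -- membership facts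
  have h2P : (2 : Algebra.adjoin ℤ {x n}) ∈ 𝓟 := by
    have h1 : (2 : ℤ) ∈ Ideal.comap (algebraMap ℤ (Algebra.adjoin ℤ {x n})) 𝓟 := by
      rw [h𝓟p]
      exact Ideal.mem_span_singleton_self 2
    simpa using (Ideal.mem_comap.mp h1)
  haveI hPprime : 𝓟.IsPrime := Ideal.IsMaximal.isPrime ‹_›
  have hyP : yR ∈ 𝓟 := by
    have hpow : yR ^ N ∈ 𝓟 := by
      have h1 : yR ^ N = 2 * (-(U + yR * bR)) := by linear_combination hrel
      rw [h1]
      exact Ideal.mul_mem_right _ _ h2P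
    exact hPprime.mem_of_pow_mem N hpow
  have hUnotP : U ∉ 𝓟 := by
    intro hmem
    have h1 : u ∈ Ideal.comap (algebraMap ℤ (Algebra.adjoin ℤ {x n})) 𝓟 := by
      rw [Ideal.mem_comap]
      simpa [hU] using hmem
    rw [h𝓟p, Ideal.mem_span_singleton] at h1
    omega
  -- pass to the localization
  set L := Localization.AtPrime 𝓟 with hL
  set φ := algebraMap (Algebra.adjoin ℤ {x n}) L with hφ
  have hUunit : IsUnit (φ U) := IsLocalization.map_units L (⟨U, hUnotP⟩ : 𝓟.primeCompl)
  have hkey2 : φ yR ∣ (2 : L) := by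
    have hpow : yR ^ N = yR * yR ^ (N - 1) := by
      conv_lhs => rw [show N = 1 + (N - 1) by omega]
      rw [pow_add, pow_one]
    have hmul : yR * (-(yR ^ (N - 1) + 2 * bR)) = 2 * U := by
      linear_combination -hrel + hpow
    obtain ⟨v, hv⟩ := hUunit
    refine ⟨φ (-(yR ^ (N - 1) + 2 * bR)) * (↑v⁻¹ : L), ?_⟩
    rw [← mul_assoc, ← map_mul, hmul, map_mul, map_ofNat, ← hv, mul_assoc,
      Units.mul_inv, mul_one]
  -- every element of 𝓟 maps into the span of φ yR
  have hspan : ∀ r : Algebra.adjoin ℤ {x n}, r ∈ 𝓟 → φ yR ∣ φ r := by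
    intro r hr
    have hr2 : (r : ℝ) ∈ (Polynomial.aeval (x n) : ℤ[X] →ₐ[ℤ] ℝ).range := by
      rw [← Algebra.adjoin_singleton_eq_range_aeval]
      exact r.2
    obtain ⟨p, hp⟩ := hr2
    set p₂ : ℤ[X] := p.comp (X - C c) with hp₂
    have haev : Polynomial.aeval yR p₂ = r := by
      apply Subtype.ext
      rw [Polynomial.aeval_subalgebra_coe, hyRcoe, hp₂, aeval_comp]
      have h1 : (Polynomial.aeval (x n + (c : ℝ))) (X - C c) = x n := by simp
      rw [h1]
      exact hp
    set m : ℤ := p₂.coeff 0 with hm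
    set w : Algebra.adjoin ℤ {x n} := Polynomial.aeval yR p₂.divX with hw
    have hdecomp : r = yR * w + (m : Algebra.adjoin ℤ {x n}) := by
      rw [← haev]
      conv_lhs => rw [← X_mul_divX_add p₂]
      simp [hw, hm]
    have hmP : (m : Algebra.adjoin ℤ {x n}) ∈ 𝓟 := by
      have : (m : Algebra.adjoin ℤ {x n}) = r - yR * w := by rw [hdecomp]; ring
      rw [this]
      exact Ideal.sub_mem _ hr (Ideal.mul_mem_right _ _ hyP)
    have hm2 : (2 : ℤ) ∣ m := by
      have h1 : m ∈ Ideal.comap (algebraMap ℤ (Algebra.adjoin ℤ {x n})) 𝓟 := by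
        rw [Ideal.mem_comap]
        simpa using hmP
      rw [h𝓟p, Ideal.mem_span_singleton] at h1
      exact h1
    obtain ⟨d, hd⟩ := hm2
    have : φ r = φ yR * φ w + 2 * φ ((d : ℤ) : Algebra.adjoin ℤ {x n}) := by
      rw [hdecomp, map_add, map_mul, hd]
      push_cast
      rw [map_mul, map_ofNat]
    rw [this]
    exact dvd_add (Dvd.intro _ rfl) (hkey2.trans (Dvd.intro _ rfl))
  -- the maximal ideal of the localization is principal
  have hmax : IsLocalRing.maximalIdeal L = Ideal.span {φ yR} := by
    rw [← Localization.AtPrime.map_eq_maximalIdeal]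
    apply le_antisymm
    · rw [Ideal.map_le_iff_le_comap]
      intro r hr
      rw [Ideal.mem_comap, Ideal.mem_span_singleton]
      exact hspan r hr
    · rw [Ideal.span_le, Set.singleton_subset_iff]
      exact Ideal.mem_map_of_mem φ hyP
  -- instances
  haveI hNoethR : IsNoetherianRing (Algebra.adjoin ℤ {x n}) := by
    haveI : Algebra.FiniteType ℤ (Algebra.adjoin ℤ {x n}) := by
      refine ⟨(Subalgebra.fg_top _).mpr ?_⟩
      classical
      exact ⟨{x n}, by simp⟩
    exact Algebra.FiniteType.isNoetherianRing ℤ _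
  haveI hNoethL : IsNoetherianRing L := IsLocalization.isNoetherianRing 𝓟.primeCompl L hNoethR
  haveI hDomL : IsDomain L := IsLocalization.isDomain_of_local_atPrime hPprime
  -- the localization is not a field
  have hnotfield : ¬ IsField L := by
    intro hF
    have hbot : IsLocalRing.maximalIdeal L = ⊥ := IsLocalRing.isField_iff_maximalIdeal_eq.mp hF
    have h2m : φ (2 : Algebra.adjoin ℤ {x n}) ∈ IsLocalRing.maximalIdeal L := by
      rw [← Localization.AtPrime.map_eq_maximalIdeal]
      exact Ideal.mem_map_of_mem φ h2P
    rw [hbot, Ideal.mem_bot] at h2m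
    have hinj : Function.Injective φ := IsLocalization.injective L 𝓟.primeCompl_le_nonZeroDivisors
    have h20 : (2 : Algebra.adjoin ℤ {x n}) = 0 := by
      apply hinj
      rw [h2m, map_zero]
    have : ((2 : Algebra.adjoin ℤ {x n}) : ℝ) = 0 := by rw [h20]; simp
    norm_num at this
  have hprin : (IsLocalRing.maximalIdeal L).IsPrincipal := ⟨⟨φ yR, hmax⟩⟩
  exact ((IsDiscreteValuationRing.TFAE L hnotfield).out 0 4).mpr hprin
end
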